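/- arXiv:2203.04256 — 16 statements merged into one kernel-verified Lean document; each statement's English description precedes it below -/
import Mathlib

section
/- If an ideal I of a commutative ring R is contained in the union of finitely many ideals I₁, …, Iₙ, then there exists a positive integer d such that Iᵈ ⊆ I_k for some k. -/
private lemma mccoy_pow_le {R : Type*} [CommRing R] (I : Ideal R) (d : ℕ) :
    ∀ (J : Ideal R), (∀ l : List R, (∀ x ∈ l, x ∈ I) → l.length = d → l.prod ∈ J) →
    I ^ d ≤ J := by
  induction d with
  | zero =>
    intro J h
    have h1 : (1 : R) ∈ J := by simpa using h [] (by simp) rfl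
    rw [pow_zero, Ideal.one_eq_top]
    intro x _
    simpa using J.mul_mem_left x h1
  | succ d ih =>
    intro J h
    rw [pow_succ]
    refine Ideal.mul_le.mpr (fun b hb a ha => ?_)
    let Ja : Ideal R :=
      { carrier := {x | x * a ∈ J}
        add_mem' := fun hx hy => by simpa [add_mul] using J.add_mem hx hy
        zero_mem' := by simp
        smul_mem' := fun r x hx => by
          simpa [smul_eq_mul, mul_assoc] using J.mul_mem_left r hx }
    have hb' : b ∈ Ja := by
      refine ih Ja (fun l hl hlen => ?_) hb
      have := h (l ++ [a]) ?_ (by simp [hlen])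
      · exact (by simpa [List.prod_append] using this : l.prod * a ∈ J)
      · intro x hx
        rcases List.mem_append.mp hx with h1 | h2
        · exact hl x h1
        · have : x = a := by simpa using h2
          rw [this]; exact ha
    exact hb'

private lemma mccoy_key {R : Type*} [CommRing R] {n : ℕ} (I : Ideal R) (f : Fin n → Ideal R)
    (h : ∀ x ∈ I, ∃ k, x ∈ f k) (m : Fin n) (c : R) (hcI : c ∈ I)
    (hck : ∀ k, k ≠ m → c ∉ f k) : I ^ (2 ^ n) ≤ f m := by
  classical
  have hcm : c ∈ f m := by
    obtain ⟨k, hk⟩ := h c hcI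
    by_cases hkm : k = m
    · rwa [hkm] at hk
    · exact absurd hk (hck k hkm)
  set T : R → Finset (Fin n) := fun x => Finset.univ.filter (fun k => x ∈ f k) with hTdef
  have hT : ∀ x k, k ∈ T x ↔ x ∈ f k := by intro x k; simp [hTdef]
  have hTne : ∀ x, x ∈ I → (T x).Nonempty := by
    intro x hx
    obtain ⟨k, hk⟩ := h x hx
    exact ⟨k, (hT x k).mpr hk⟩
  have main : ∀ t (l : List R), (∀ x ∈ l, x ∈ I) → l.length = 2 ^ t →
      ∃ y, y ∈ I ∧ y - l.prod ∈ f m ∧ (y ∈ f m ∨ t + 1 ≤ (T y).card) := by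
    intro t
    induction t with
    | zero =>
      intro l hl hlen
      have hlen1 : l.length = 1 := by simpa using hlen
      obtain ⟨a, rfl⟩ := List.length_eq_one_iff.mp hlen1
      refine ⟨a, hl a (by simp), by simp, Or.inr ?_⟩
      simpa using Finset.card_pos.mpr (hTne a (hl a (by simp)))
    | succ t ih =>
      intro l hl hlen
      have hlen2 : 2 ^ (t + 1) = 2 ^ t + 2 ^ t := by rw [pow_succ]; omega
      set l₁ := l.take (2 ^ t) with hl₁
      set l₂ := l.drop (2 ^ t) with hl₂
      have hlen₁ : l₁.length = 2 ^ t := by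
        rw [hl₁, List.length_take, hlen]
        omega
      have hlen₂ : l₂.length = 2 ^ t := by
        rw [hl₂, List.length_drop, hlen]
        omega
      obtain ⟨y₁, hy₁I, hy₁d, hy₁o⟩ := ih l₁ (fun x hx => hl x (List.take_subset _ _ hx)) hlen₁
      obtain ⟨y₂, hy₂I, hy₂d, hy₂o⟩ := ih l₂ (fun x hx => hl x (List.drop_subset _ _ hx)) hlen₂
      have hprod : l.prod = l₁.prod * l₂.prod := by
        rw [hl₁, hl₂, ← List.prod_append, List.take_append_drop]
      rw [hprod]
      set P₁ := l₁.prod with hP₁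
      set P₂ := l₂.prod with hP₂
      have hdiff : ∀ z : R, z ∈ f m → (y₁ + z) * y₂ - P₁ * P₂ ∈ f m := by
        intro z hz
        have heq : (y₁ + z) * y₂ - P₁ * P₂ = y₁ * (y₂ - P₂) + (y₁ - P₁) * P₂ + z * y₂ := by
          ring
        rw [heq]
        exact add_mem (add_mem ((f m).mul_mem_left _ hy₂d) ((f m).mul_mem_right _ hy₁d))
          ((f m).mul_mem_right _ hz)
      have hdiff0 : y₁ * y₂ - P₁ * P₂ ∈ f m := by simpa using hdiff 0 (zero_mem _)
      by_cases hy₁m : y₁ ∈ f m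
      · exact ⟨y₁ * y₂, I.mul_mem_right _ hy₁I, hdiff0, Or.inl ((f m).mul_mem_right _ hy₁m)⟩
      by_cases hy₂m : y₂ ∈ f m
      · exact ⟨y₁ * y₂, I.mul_mem_right _ hy₁I, hdiff0, Or.inl ((f m).mul_mem_left _ hy₂m)⟩
      have hc₁ := hy₁o.resolve_left hy₁m
      have hc₂ := hy₂o.resolve_left hy₂m
      by_cases hsub : T y₂ ⊆ T y₁
      · refine ⟨(y₁ + c) * y₂, I.mul_mem_right _ (I.add_mem hy₁I hcI), hdiff c hcm, Or.inr ?_⟩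
        have hdisj : Disjoint (T (y₁ + c)) (T y₂) := by
          rw [Finset.disjoint_left]
          intro k hk1 hk2
          have hk1' : y₁ + c ∈ f k := (hT _ _).mp hk1
          have hk2' : y₁ ∈ f k := (hT _ _).mp (hsub hk2)
          have hck' : c ∈ f k := by
            have := (f k).sub_mem hk1' hk2'
            simpa using this
          by_cases hkm : k = m
          · subst hkm; exact hy₁m hk2'
          · exact hck k hkm hck'
        have hsubU : T (y₁ + c) ∪ T y₂ ⊆ T ((y₁ + c) * y₂) := by
          intro k hk
          rcases Finset.mem_union.mp hk with hk | hk
          · exact (hT _ _).mpr ((f k).mul_mem_right _ ((hT _ _).mp hk))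
          · exact (hT _ _).mpr ((f k).mul_mem_left _ ((hT _ _).mp hk))
        have hne : 1 ≤ (T (y₁ + c)).card :=
          Finset.card_pos.mpr (hTne _ (I.add_mem hy₁I hcI))
        have hcard := Finset.card_le_card hsubU
        rw [Finset.card_union_of_disjoint hdisj] at hcard
        omega
      · obtain ⟨k₀, hk₀2, hk₀1⟩ := Finset.not_subset.mp hsub
        refine ⟨y₁ * y₂, I.mul_mem_right _ hy₁I, hdiff0, Or.inr ?_⟩
        have hsubU : insert k₀ (T y₁) ⊆ T (y₁ * y₂) := by
          intro k hk
          rcases Finset.mem_insert.mp hk with rfl | hk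
          · exact (hT _ _).mpr ((f k).mul_mem_left _ ((hT _ _).mp hk₀2))
          · exact (hT _ _).mpr ((f k).mul_mem_right _ ((hT _ _).mp hk))
        have hcard := Finset.card_le_card hsubU
        rw [Finset.card_insert_of_notMem hk₀1] at hcard
        omega
  refine mccoy_pow_le I (2 ^ n) (f m) (fun l hl hlen => ?_)
  obtain ⟨y, hyI, hyd, hyo⟩ := main n l hl hlen
  rcases hyo with hym | hcard
  · have heq : l.prod = y - (y - l.prod) := by ring
    rw [heq]
    exact (f m).sub_mem hym hyd
  · exfalso
    have hle : (T y).card ≤ n := by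
      simpa using Finset.card_le_univ (T y)
    omega

private lemma mccoy_aux : ∀ (n : ℕ) {R : Type*} [CommRing R] (I : Ideal R)
    (f : Fin n → Ideal R), (∀ x ∈ I, ∃ k, x ∈ f k) →
    ∃ d : ℕ, 0 < d ∧ ∃ k, I ^ d ≤ f k := by
  intro n
  induction n with
  | zero =>
    intro R _ I f h
    obtain ⟨k, -⟩ := h 0 I.zero_mem
    exact k.elim0
  | succ n ih =>
    intro R _ I f h
    by_cases hc : ∃ m, ∃ c, c ∈ I ∧ ∀ k, k ≠ m → c ∉ f k
    · obtain ⟨m, c, hcI, hck⟩ := hc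
      exact ⟨2 ^ (n + 1), by positivity, m, mccoy_key I f h m c hcI hck⟩
    · push_neg at hc
      have h' : ∀ x ∈ I, ∃ j : Fin n, x ∈ (fun j : Fin n => f j.castSucc) j := by
        intro x hx
        obtain ⟨k, hkne, hkx⟩ := hc (Fin.last n) x hx
        have hlt : (k : ℕ) < n := Fin.val_lt_last hkne
        refine ⟨⟨k, hlt⟩, ?_⟩
        show x ∈ f ((⟨(k : ℕ), hlt⟩ : Fin n).castSucc)
        have heq : (⟨(k : ℕ), hlt⟩ : Fin n).castSucc = k := by
          ext; simp
        rw [heq]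
        exact hkx
      obtain ⟨d, hd, j, hj⟩ := ih I (fun j : Fin n => f j.castSucc) h'
      exact ⟨d, hd, j.castSucc, hj⟩

theorem mccoy_avoidance {R : Type*} [CommRing R] (n : ℕ) (I : Ideal R) (f : Fin n → Ideal R)
    (h : (I : Set R) ⊆ ⋃ k, (f k : Set R)) :
    ∃ d : ℕ, 0 < d ∧ ∃ k, I ^ d ≤ f k := by
  refine mccoy_aux n I f (fun x hx => ?_)
  have hx' := h hx
  simpa using hx'
end

section
/- If an ideal I of a commutative ring R is contained in the union of finitely many ideals I₁, …, Iₙ, all but at most two of which are radical ideals, then I ⊆ I_k for some k. -/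
open scoped Classical in
theorem avoidance_all_but_two_radical {R : Type*} [CommRing R] (n : ℕ) (I : Ideal R)
    (f : Fin n → Ideal R)
    (hrad : (Finset.univ.filter fun k => ¬ (f k).IsRadical).card ≤ 2)
    (h : (I : Set R) ⊆ ⋃ k, (f k : Set R)) :
    ∃ k, I ≤ f k := by
  by_contra hc
  push_neg at hc
  -- n must be positive
  rcases Nat.eq_zero_or_pos n with hn | hn
  · subst hn
    have := h (I.zero_mem)
    simp at this
  -- for each radical k, find a prime above f k not containing I
  have key : ∀ k : Fin n, (f k).IsRadical → ∃ p : Ideal R, p.IsPrime ∧ f k ≤ p ∧ ¬ I ≤ p := by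
    intro k hk
    obtain ⟨x, hxI, hxk⟩ := SetLike.not_le_iff_exists.mp (hc k)
    have hxr : x ∉ (f k).radical := by rwa [hk.radical]
    rw [Ideal.radical_eq_sInf] at hxr
    simp only [Submodule.mem_sInf, Set.mem_setOf_eq, not_forall] at hxr
    obtain ⟨p, ⟨hle, hp⟩, hxp⟩ := hxr
    exact ⟨p, hp, hle, fun hIp => hxp (hIp hxI)⟩
  choose p hp1 hp2 hp3 using key
  set g : Fin n → Ideal R := fun k =>
    if hk : (f k).IsRadical then p k hk else f k with hg
  -- pick indices a b covering the non-radical set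
  set s := (Finset.univ.filter fun k => ¬ (f k).IsRadical) with hs
  have had : ∃ a b : Fin n, ∀ i : Fin n, i ≠ a → i ≠ b → i ∉ s := by
    rcases s.eq_empty_or_nonempty with he | ⟨a, ha⟩
    · exact ⟨⟨0, hn⟩, ⟨0, hn⟩, fun i _ _ => he ▸ Finset.notMem_empty i⟩
    · rcases (s.erase a).eq_empty_or_nonempty with he | ⟨b, hb⟩
      · refine ⟨a, a, fun i hi _ his => ?_⟩
        exact Finset.notMem_empty i (he ▸ Finset.mem_erase.mpr ⟨hi, his⟩)
      · refine ⟨a, b, fun i hia hib his => ?_⟩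
        have h3 : ({a, b} : Finset (Fin n)) ⊆ s := by
          intro x hx
          rcases Finset.mem_insert.mp hx with rfl | hx
          · exact ha
          · exact Finset.mem_erase.mp ((Finset.mem_singleton.mp hx) ▸ hb) |>.2
        have hins : insert i ({a, b} : Finset (Fin n)) ⊆ s := by
          intro x hx
          rcases Finset.mem_insert.mp hx with rfl | hx
          · exact his
          · exact h3 hx
        have hcard : 3 ≤ s.card := by
          have h1 : (insert i ({a, b} : Finset (Fin n))).card = 3 := by
            rw [Finset.card_insert_of_notMem (by simp [hia, hib]),
              Finset.card_insert_of_notMem (by simpa using Finset.mem_erase.mp hb |>.1.symm)]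
            simp
          calc 3 = (insert i ({a, b} : Finset (Fin n))).card := h1.symm
            _ ≤ s.card := Finset.card_le_card hins
        omega
  obtain ⟨a, b, hab⟩ := had
  have hprime : ∀ i ∈ (Finset.univ : Finset (Fin n)), i ≠ a → i ≠ b → (g i).IsPrime := by
    intro i _ hia hib
    have : (f i).IsRadical := by
      by_contra hri
      exact hab i hia hib (Finset.mem_filter.mpr ⟨Finset.mem_univ i, hri⟩)
    simp only [hg, dif_pos this]
    exact hp1 i this
  have hsub : (I : Set R) ⊆ ⋃ i ∈ ((Finset.univ : Finset (Fin n)) : Set (Fin n)), (g i : Set R) := by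
    intro x hx
    obtain ⟨k, hk⟩ := Set.mem_iUnion.mp (h hx)
    refine Set.mem_biUnion (Finset.mem_univ k) ?_
    by_cases hrk : (f k).IsRadical
    · simp only [hg, dif_pos hrk]
      exact hp2 k hrk hk
    · simpa [hg, dif_neg hrk] using hk
  obtain ⟨i, _, hi⟩ := (Ideal.subset_union_prime a b hprime).mp hsub
  by_cases hri : (f i).IsRadical
  · rw [hg] at hi; simp only [dif_pos hri] at hi
    exact hp3 i hri hi
  · rw [hg] at hi; simp only [dif_neg hri] at hi
    exact hc i hi
end

section
/- Every idempotent ideal has the avoidance property: if I is an ideal of a commutative ring R with I = I², and I is contained in a finite union of ideals I₁, …, Iₙ, then I ⊆ I_k for some k. -/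
open scoped Pointwise

theorem idempotent_ideal_avoidance {R : Type*} [CommRing R] (I : Ideal R)
    (hI : I ^ 2 = I) (n : ℕ) (f : Fin n → Ideal R)
    (h : (I : Set R) ⊆ ⋃ k, (f k : Set R)) :
    ∃ k, I ≤ f k := by
  classical
  -- the inclusion of I into R as an additive hom
  set φ : ↥I →+ R := (I.subtype).toAddMonoidHom with hφ
  set H : Fin n → AddSubgroup ↥I := fun k => ((f k).toAddSubgroup).comap φ with hH
  have hmemH : ∀ (k : Fin n) (x : ↥I), x ∈ H k ↔ (x : R) ∈ f k := by
    intro k x; rfl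
  have hcovers : ⋃ k ∈ (Finset.univ : Finset (Fin n)),
      ((0 : ↥I) +ᵥ (H k : Set ↥I)) = Set.univ := by
    refine Set.eq_univ_of_forall fun x => ?_
    obtain ⟨s, ⟨k, rfl⟩, hxk⟩ := h x.2
    refine Set.mem_iUnion₂.mpr ⟨k, Finset.mem_univ k, ?_⟩
    rw [zero_vadd]
    exact (hmemH k x).mpr hxk
  have := Classical.decPred (AddSubgroup.FiniteIndex : AddSubgroup ↥I → Prop)
  have hcov2 := AddSubgroup.leftCoset_cover_filter_FiniteIndex hcovers
  set F : Finset (Fin n) :=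
    (Finset.univ : Finset (Fin n)).filter (fun i => (H i).FiniteIndex) with hF
  -- D
  set D : Ideal R := I ⊓ ⨅ k ∈ F, f k with hD
  have hDle : ∀ k ∈ F, D ≤ f k := by
    intro k hk
    exact inf_le_right.trans ((iInf_le _ k).trans (iInf_le _ hk))
  set q : R →+* R ⧸ D := Ideal.Quotient.mk D with hq
  -- the kernel subgroup
  set K : AddSubgroup ↥I := ⨅ k ∈ F, H k with hK
  have hKfin : K.FiniteIndex :=
    AddSubgroup.finiteIndex_iInf' H (fun i hi => (Finset.mem_filter.mp hi).2)
  have : Finite (↥I ⧸ K) := @AddSubgroup.finite_quotient_of_finiteIndex _ _ K hKfin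
  -- the map I → R/D kills K
  set ψ : ↥I →+ R ⧸ D := (q : R →+* R ⧸ D).toAddMonoidHom.comp φ with hψ
  have hKker : K ≤ ψ.ker := by
    intro x hx
    have hxD : (x : R) ∈ D := by
      refine ⟨x.2, (Submodule.mem_iInf _).mpr fun k => (Submodule.mem_iInf _).mpr fun hk => ?_⟩
      exact (hmemH k x).mp ((AddSubgroup.mem_iInf ..).mp ((AddSubgroup.mem_iInf ..).mp hx k) hk)
    simpa [AddMonoidHom.mem_ker, hψ, hq, hφ] using (Ideal.Quotient.eq_zero_iff_mem).mpr hxD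
  -- image of I in R/D is finite
  have hfin : (q '' (I : Set R)).Finite := by
    have : q '' (I : Set R) = Set.range (QuotientAddGroup.lift K ψ hKker) := by
      ext y
      constructor
      · rintro ⟨a, ha, rfl⟩
        exact ⟨QuotientAddGroup.mk (⟨a, ha⟩ : ↥I), rfl⟩
      · rintro ⟨z, rfl⟩
        obtain ⟨x, rfl⟩ := QuotientAddGroup.mk_surjective z
        exact ⟨x, x.2, rfl⟩
    rw [this]
    exact Set.finite_range _
  -- the image ideal is f.g. and idempotent
  have hmapspan : Ideal.map q I = Ideal.span (q '' (I : Set R)) := rfl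
  have hFG : (Ideal.map q I).FG := by
    rw [hmapspan]
    exact Submodule.fg_span hfin
  have hle : Ideal.map q I ≤ Ideal.map q I • Ideal.map q I := by
    rw [smul_eq_mul, ← pow_two, ← Ideal.map_pow, hI]
  obtain ⟨r, hr1, hr0⟩ :=
    Submodule.exists_sub_one_mem_and_smul_eq_zero_of_fg_of_le_smul
      (Ideal.map q I) (Ideal.map q I) hFG hle
  have he : (1 : R ⧸ D) - r ∈ Ideal.map q I := by
    simpa using (Ideal.map q I).neg_mem hr1
  obtain ⟨x₀, hx₀I, hx₀e⟩ :=
    (Ideal.mem_map_iff_of_surjective q Ideal.Quotient.mk_surjective).mp he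
  -- find k₀ ∈ F containing x₀
  have hx₀cov : (⟨x₀, hx₀I⟩ : ↥I) ∈ ⋃ k ∈ F, ((0 : ↥I) +ᵥ (H k : Set ↥I)) := by
    rw [hcov2]; trivial
  simp only [Set.mem_iUnion, zero_vadd] at hx₀cov
  obtain ⟨k₀, hk₀F, hk₀mem⟩ := hx₀cov
  have hx₀k : x₀ ∈ f k₀ := (hmemH k₀ _).mp hk₀mem
  refine ⟨k₀, fun x hx => ?_⟩
  have hqx : q x ∈ Ideal.map q I := Ideal.mem_map_of_mem q hx
  have hzero : q (x - x₀ * x) = 0 := by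
    have h1 : r • q x = 0 := hr0 (q x) hqx
    rw [smul_eq_mul] at h1
    have : q (x - x₀ * x) = q x - q x₀ * q x := by
      simp [map_sub, map_mul]
    rw [this, hx₀e, sub_mul, one_mul, h1, sub_zero, sub_self]
  have hD' : x - x₀ * x ∈ D := (Ideal.Quotient.eq_zero_iff_mem).mp hzero
  have : x = (x - x₀ * x) + x₀ * x := by ring
  rw [this]
  exact (f k₀).add_mem (hDle k₀ hk₀F hD') (Ideal.mul_mem_right x _ hx₀k)
end

section
/- Let I₁, …, Iₙ be finitely many ideals of a commutative ring R and M a finitely generated faithful R-module. If M = ⋃_{k=1}^n I_k M, then I_k = R for some k. -/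
open Submodule

lemma avoid_max_smul {R : Type*} [CommRing R] {M : Type*} [AddCommGroup M] [Module R M]
    (hM : ∀ 𝔪 : Ideal R, 𝔪.IsMaximal → 𝔪 • (⊤ : Submodule R M) ≠ ⊤)
    (s : Finset (Ideal R)) (hs : ∀ J ∈ s, J.IsMaximal) :
    ∃ m : M, ∀ J ∈ s, m ∉ J • (⊤ : Submodule R M) := by
  classical
  revert hs
  induction s using Finset.induction_on with
  | empty => exact fun _ => ⟨0, by simp⟩
  | @insert 𝔪 s h𝔪s ih =>
    intro hs'
    obtain ⟨m', hm'⟩ := ih (fun J hJ => hs' J (Finset.mem_insert_of_mem hJ))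
    have h𝔪 : 𝔪.IsMaximal := hs' 𝔪 (Finset.mem_insert_self _ _)
    -- find m₀ ∉ 𝔪 • ⊤
    have hne : 𝔪 • (⊤ : Submodule R M) ≠ ⊤ := hM 𝔪 h𝔪
    obtain ⟨m₀, -, hm₀⟩ : ∃ m₀ : M, m₀ ∈ (⊤ : Submodule R M) ∧ m₀ ∉ 𝔪 • (⊤ : Submodule R M) := by
      by_contra hcon
      push_neg at hcon
      exact hne (le_antisymm le_top (fun x hx => hcon x hx))
    by_cases hc : m' ∈ 𝔪 • (⊤ : Submodule R M)
    · -- need c ∈ ∏ J ∈ s, J with c ∉ 𝔪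
      have hprod : ¬ (s.prod id ≤ 𝔪) := by
        rw [h𝔪.isPrime.prod_le]
        rintro ⟨J, hJ, hJle⟩
        exact h𝔪s (((hs' J (Finset.mem_insert_of_mem hJ)).eq_of_le h𝔪.ne_top hJle) ▸ hJ)
      obtain ⟨c, hcprod, hc𝔪⟩ := SetLike.not_le_iff_exists.mp hprod
      refine ⟨m' + c • m₀, ?_⟩
      intro J hJ
      rcases Finset.mem_insert.mp hJ with rfl | hJ
      · intro habs
        -- c • m₀ ∈ 𝔪 • ⊤ then, so m₀ ∈ 𝔪 • ⊤
        have hcm : c • m₀ ∈ J • (⊤ : Submodule R M) := by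
          have := Submodule.sub_mem _ habs hc
          simpa using this
        obtain ⟨y, i, hi, hyi⟩ := h𝔪.exists_inv hc𝔪
        have : (y * c + i) • m₀ ∈ J • (⊤ : Submodule R M) := by
          rw [add_smul, mul_smul]
          exact Submodule.add_mem _ (Submodule.smul_mem _ y hcm)
            (Submodule.smul_mem_smul hi mem_top)
        rw [hyi, one_smul] at this
        exact hm₀ this
      · intro habs
        have hcJ : c ∈ J := Ideal.prod_le_inf.trans (Finset.inf_le hJ) hcprod
        have : m' ∈ J • (⊤ : Submodule R M) := by
          have := Submodule.sub_mem _ habs (Submodule.smul_mem_smul hcJ (mem_top (x := m₀)))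
          simpa using this
        exact hm' J hJ this
    · refine ⟨m', ?_⟩
      intro J hJ
      rcases Finset.mem_insert.mp hJ with rfl | hJ
      · exact hc
      · exact hm' J hJ

theorem fg_faithful_union_smul {R : Type*} [CommRing R] {M : Type*} [AddCommGroup M]
    [Module R M] [Module.Finite R M]
    (hfaithful : ∀ r : R, (∀ m : M, r • m = 0) → r = 0)
    (n : ℕ) (f : Fin n → Ideal R)
    (h : ∀ m : M, ∃ k, m ∈ f k • (⊤ : Submodule R M)) :
    ∃ k, f k = ⊤ := by
  classical
  by_contra hcon
  push_neg at hcon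
  -- choose maximal ideals above each f k
  have hmax : ∀ k, ∃ 𝔪 : Ideal R, 𝔪.IsMaximal ∧ f k ≤ 𝔪 := fun k =>
    let ⟨𝔪, h1, h2⟩ := Ideal.exists_le_maximal (f k) (hcon k)
    ⟨𝔪, h1, h2⟩
  choose g hg1 hg2 using hmax
  have hM : ∀ 𝔪 : Ideal R, 𝔪.IsMaximal → 𝔪 • (⊤ : Submodule R M) ≠ ⊤ := by
    intro 𝔪 h𝔪 htop
    have hfg : (⊤ : Submodule R M).FG := Module.Finite.fg_top
    obtain ⟨r, hr1, hr2⟩ :=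
      Submodule.exists_sub_one_mem_and_smul_eq_zero_of_fg_of_le_smul 𝔪 ⊤ hfg htop.ge
    have : r = 0 := hfaithful r (fun m => hr2 m mem_top)
    rw [this, zero_sub] at hr1
    exact h𝔪.ne_top (Ideal.eq_top_of_isUnit_mem _ hr1 (IsUnit.neg isUnit_one))
  obtain ⟨m, hm⟩ := avoid_max_smul hM (Finset.image g Finset.univ)
    (by intro J hJ; obtain ⟨k, -, rfl⟩ := Finset.mem_image.mp hJ; exact hg1 k)
  obtain ⟨k, hk⟩ := h m
  exact hm (g k) (Finset.mem_image_of_mem g (Finset.mem_univ k))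
    (Submodule.smul_mono_left (hg2 k) hk)
end

section
/- Every finitely generated faithful multiplication module has avoidance: if M is such a module over a ring R and M equals a finite union of R-submodules M₁, …, Mₙ, then M = M_k for some k. -/
theorem multiplication_module_avoidance {R : Type*} [CommRing R] {M : Type*} [AddCommGroup M]
    [Module R M] [Module.Finite R M]
    (hfaithful : ∀ r : R, (∀ m : M, r • m = 0) → r = 0)
    (hmult : ∀ N : Submodule R M, ∃ I : Ideal R, N = I • (⊤ : Submodule R M))
    (n : ℕ) (f : Fin n → Submodule R M)
    (h : ∀ m : M, ∃ k, m ∈ f k) :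
    ∃ k, f k = ⊤ := by
  classical
  by_contra hcon
  push_neg at hcon
  -- every f k is contained in P • ⊤ for some maximal ideal P
  have key : ∀ k, ∃ P : Ideal R, P.IsMaximal ∧ f k ≤ P • (⊤ : Submodule R M) := by
    intro k
    obtain ⟨I, hI⟩ := hmult (f k)
    have hIne : I ≠ ⊤ := by
      rintro rfl
      exact hcon k (by simpa using hI)
    obtain ⟨P, hPmax, hIP⟩ := Ideal.exists_le_maximal I hIne
    exact ⟨P, hPmax, hI ▸ Submodule.smul_mono_left hIP⟩
  choose P hPmax hPle using key
  -- Nakayama + faithfulness : Q • ⊤ ≠ ⊤ for every proper ideal Q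
  have hne : ∀ Q : Ideal R, Q ≠ ⊤ → Q • (⊤ : Submodule R M) ≠ ⊤ := by
    intro Q hQ hQtop
    obtain ⟨r, hr1, hr0⟩ :=
      Submodule.exists_sub_one_mem_and_smul_eq_zero_of_fg_of_le_smul Q ⊤
        (Module.Finite.fg_top (R := R) (M := M)) (le_of_eq hQtop.symm)
    have : r = 0 := hfaithful r fun m => hr0 m trivial
    subst this
    apply hQ
    rw [Ideal.eq_top_iff_one]
    simpa using Q.neg_mem hr1
  -- the finite set of maximal ideals involved
  set S : Finset (Ideal R) := Finset.univ.image P with hS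
  have hSmax : ∀ Q ∈ S, Q.IsMaximal := by
    intro Q hQ
    obtain ⟨k, _, rfl⟩ := Finset.mem_image.mp hQ
    exact hPmax k
  -- choose y_Q ∉ Q • ⊤
  have hy : ∀ Q ∈ S, ∃ y : M, y ∉ Q • (⊤ : Submodule R M) := by
    intro Q hQ
    have := hne Q (hSmax Q hQ).ne_top
    by_contra hy
    push_neg at hy
    exact this (Submodule.eq_top_iff'.mpr hy)
  choose y hy using hy
  -- choose r_Q ∈ ∏_{Q' ∈ S, Q' ≠ Q} Q' with r_Q ∉ Q
  have hr : ∀ Q ∈ S, ∃ r : R, r ∈ (S.erase Q).prod id ∧ r ∉ Q := by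
    intro Q hQ
    have hnotle : ¬ (S.erase Q).prod id ≤ Q := by
      rw [(hSmax Q hQ).isPrime.prod_le]
      rintro ⟨Q', hQ', hle⟩
      have hQ'max := hSmax Q' (Finset.mem_of_mem_erase hQ')
      exact (Finset.ne_of_mem_erase hQ') (hQ'max.eq_of_le (hSmax Q hQ).ne_top hle)
    obtain ⟨r, hr1, hr2⟩ := SetLike.not_le_iff_exists.mp hnotle
    exact ⟨r, hr1, hr2⟩
  choose r hrmem hrnot using hr
  -- the avoiding element
  set x : M := ∑ Q ∈ S.attach, r Q.1 Q.2 • y Q.1 Q.2 with hx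
  -- x avoids every Q • ⊤ for Q ∈ S
  have havoid : ∀ Q₀ (hQ₀ : Q₀ ∈ S), x ∉ Q₀ • (⊤ : Submodule R M) := by
    intro Q₀ hQ₀ hxmem
    -- the sum over the other terms lies in Q₀ • ⊤
    have hrest : ∑ Q ∈ S.attach.erase ⟨Q₀, hQ₀⟩, r Q.1 Q.2 • y Q.1 Q.2
        ∈ Q₀ • (⊤ : Submodule R M) := by
      apply Submodule.sum_mem
      intro Q hQ
      have hne' : Q.1 ≠ Q₀ := fun hh => (Finset.ne_of_mem_erase hQ) (Subtype.ext hh)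
      have h1 : r Q.1 Q.2 ∈ Q₀ := by
        have : (S.erase Q.1).prod id ≤ Q₀ := by
          have hQ₀' : Q₀ ∈ S.erase Q.1 := Finset.mem_erase.mpr ⟨hne'.symm, hQ₀⟩
          calc (S.erase Q.1).prod id
              = ((S.erase Q.1).erase Q₀).prod id * id Q₀ :=
                (Finset.prod_erase_mul _ id hQ₀').symm
            _ ≤ Q₀ := Ideal.mul_le_right
        exact this (hrmem Q.1 Q.2)
      exact Submodule.smul_mem_smul h1 trivial
    have hterm : r Q₀ hQ₀ • y Q₀ hQ₀ ∈ Q₀ • (⊤ : Submodule R M) := by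
      have hsum : r Q₀ hQ₀ • y Q₀ hQ₀
          = x - ∑ Q ∈ S.attach.erase ⟨Q₀, hQ₀⟩, r Q.1 Q.2 • y Q.1 Q.2 := by
        rw [hx, ← Finset.add_sum_erase _ _ (Finset.mem_attach S ⟨Q₀, hQ₀⟩),
          add_sub_cancel_right]
      rw [hsum]
      exact Submodule.sub_mem _ hxmem hrest
    -- r_{Q₀} is invertible mod Q₀, so y_{Q₀} ∈ Q₀ • ⊤, contradiction
    obtain ⟨u, i, hi, hui⟩ := (hSmax Q₀ hQ₀).exists_inv (hrnot Q₀ hQ₀)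
    have : y Q₀ hQ₀ ∈ Q₀ • (⊤ : Submodule R M) := by
      have : y Q₀ hQ₀ = u • (r Q₀ hQ₀ • y Q₀ hQ₀) + i • y Q₀ hQ₀ := by
        rw [smul_smul, ← add_smul, hui, one_smul]
      rw [this]
      exact Submodule.add_mem _ (Submodule.smul_mem _ u hterm)
        (Submodule.smul_mem_smul hi trivial)
    exact hy Q₀ hQ₀ this
  -- but x must be in some f k ≤ P k • ⊤ with P k ∈ S
  obtain ⟨k, hk⟩ := h x
  exact havoid (P k) (Finset.mem_image.mpr ⟨k, Finset.mem_univ k, rfl⟩) (hPle k hk)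
end

section
/- If a ring map φ : R → S is such that every ideal of S is extended under φ (i.e. J = (φ⁻¹(J))S for all ideals J of S), and R is an avoidance ring, then S is an avoidance ring. -/
/-- A commutative ring is an avoidance ring if every ideal contained in a finite
union of ideals is contained in one of them. -/
def IsAvoidanceRing (R : Type*) [CommRing R] : Prop :=
  ∀ (n : ℕ) (I : Ideal R) (f : Fin n → Ideal R),
    (I : Set R) ⊆ (⋃ k, (f k : Set R)) → ∃ k, I ≤ f k

theorem avoidance_of_all_ideals_extended {R S : Type*} [CommRing R] [CommRing S]
    (φ : R →+* S) (hext : ∀ J : Ideal S, J = (J.comap φ).map φ)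
    (hR : IsAvoidanceRing R) : IsAvoidanceRing S := by
  intro n I f hsub
  obtain ⟨k, hk⟩ := hR n (I.comap φ) (fun k => (f k).comap φ) (by
    intro x hx
    have : φ x ∈ (I : Set S) := hx
    obtain ⟨_, ⟨k, rfl⟩, hk⟩ := hsub this
    exact Set.mem_iUnion.2 ⟨k, hk⟩)
  refine ⟨k, ?_⟩
  calc I = (I.comap φ).map φ := hext I
    _ ≤ ((f k).comap φ).map φ := Ideal.map_mono hk
    _ = f k := (hext (f k)).symm
end

section
/- Any quotient of an avoidance ring is an avoidance ring. -/
theorem avoidance_quotient {R : Type*} [CommRing R] (hR : IsAvoidanceRing R)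
    (I : Ideal R) : IsAvoidanceRing (R ⧸ I) := by
  intro n J f hJ
  have hsub : ((J.comap (Ideal.Quotient.mk I) : Ideal R) : Set R) ⊆
      ⋃ k, (((f k).comap (Ideal.Quotient.mk I) : Ideal R) : Set R) := by
    intro x hx
    have h := hJ hx
    rw [Set.mem_iUnion] at h ⊢
    exact h
  obtain ⟨k, hk⟩ := hR n _ _ hsub
  refine ⟨k, fun y hy => ?_⟩
  obtain ⟨x, rfl⟩ := Ideal.Quotient.mk_surjective y
  exact hk hy
end

section
/- Any localization of an avoidance ring at a multiplicative subset is an avoidance ring. -/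
theorem avoidance_localization {R : Type*} [CommRing R] (M : Submonoid R)
    (S : Type*) [CommRing S] [Algebra R S] [IsLocalization M S]
    (hR : IsAvoidanceRing R) : IsAvoidanceRing S := by
  intro n I f hsub
  have hs : ((I.comap (algebraMap R S) : Ideal R) : Set R) ⊆
      ⋃ k, (((f k).comap (algebraMap R S) : Ideal R) : Set R) := by
    intro x hx
    have hmem : algebraMap R S x ∈ (I : Set S) := hx
    obtain ⟨j, hj⟩ := Set.mem_iUnion.mp (hsub hmem)
    exact Set.mem_iUnion.mpr ⟨j, hj⟩
  obtain ⟨k, hk⟩ := hR n (I.comap (algebraMap R S))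
    (fun k => (f k).comap (algebraMap R S)) hs
  refine ⟨k, ?_⟩
  calc I = Ideal.map (algebraMap R S) (I.comap (algebraMap R S)) :=
        (IsLocalization.map_comap M S I).symm
    _ ≤ Ideal.map (algebraMap R S) ((f k).comap (algebraMap R S)) := Ideal.map_mono hk
    _ = f k := IsLocalization.map_comap M S (f k)
end

section
/- A finite product R₁ × R₂ of commutative rings is an avoidance ring if and only if both R₁ and R₂ are avoidance rings. -/
theorem avoidance_prod {R₁ R₂ : Type*} [CommRing R₁] [CommRing R₂] :
    IsAvoidanceRing (R₁ × R₂) ↔ IsAvoidanceRing R₁ ∧ IsAvoidanceRing R₂ := by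
  classical
  constructor
  · intro h
    constructor
    · intro n I f hsub
      have hcov : ((Ideal.prod I ⊤ : Ideal (R₁ × R₂)) : Set (R₁ × R₂)) ⊆
          ⋃ k, ((Ideal.prod (f k) ⊤ : Ideal (R₁ × R₂)) : Set (R₁ × R₂)) := by
        rintro ⟨x, y⟩ hxy
        obtain ⟨hx, -⟩ := (Ideal.mem_prod _ _).mp hxy
        obtain ⟨s, ⟨j, rfl⟩, hj⟩ := hsub hx
        exact Set.mem_iUnion.mpr ⟨j, (Ideal.mem_prod _ _).mpr ⟨hj, trivial⟩⟩
      obtain ⟨k, hk⟩ := h n (Ideal.prod I ⊤) (fun k => Ideal.prod (f k) ⊤) hcov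
      refine ⟨k, fun x hx => ?_⟩
      have : ((x, 0) : R₁ × R₂) ∈ Ideal.prod (f k) ⊤ :=
        hk ((Ideal.mem_prod _ _).mpr ⟨hx, trivial⟩)
      exact this.1
    · intro n I f hsub
      have hcov : ((Ideal.prod ⊤ I : Ideal (R₁ × R₂)) : Set (R₁ × R₂)) ⊆
          ⋃ k, ((Ideal.prod ⊤ (f k) : Ideal (R₁ × R₂)) : Set (R₁ × R₂)) := by
        rintro ⟨y, x⟩ hxy
        obtain ⟨-, hx⟩ := (Ideal.mem_prod _ _).mp hxy
        obtain ⟨s, ⟨j, rfl⟩, hj⟩ := hsub hx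
        exact Set.mem_iUnion.mpr ⟨j, (Ideal.mem_prod _ _).mpr ⟨trivial, hj⟩⟩
      obtain ⟨k, hk⟩ := h n (Ideal.prod ⊤ I) (fun k => Ideal.prod ⊤ (f k)) hcov
      refine ⟨k, fun x hx => ?_⟩
      have : ((0, x) : R₁ × R₂) ∈ Ideal.prod ⊤ (f k) :=
        hk ((Ideal.mem_prod _ _).mpr ⟨trivial, hx⟩)
      exact this.2
  · rintro ⟨h₁, h₂⟩ n I f hsub
    set I₁ : Ideal R₁ := Ideal.map (RingHom.fst R₁ R₂) I with hI₁
    set I₂ : Ideal R₂ := Ideal.map (RingHom.snd R₁ R₂) I with hI₂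
    set A : Fin n → Ideal R₁ := fun k => Ideal.map (RingHom.fst R₁ R₂) (f k) with hA
    set B : Fin n → Ideal R₂ := fun k => Ideal.map (RingHom.snd R₁ R₂) (f k) with hB
    have hIeq : I = Ideal.prod I₁ I₂ := Ideal.ideal_prod_eq I
    have hfeq : ∀ k, f k = Ideal.prod (A k) (B k) := fun k => Ideal.ideal_prod_eq (f k)
    have memI : ∀ (x : R₁) (y : R₂), (x, y) ∈ I ↔ x ∈ I₁ ∧ y ∈ I₂ := by
      intro x y; rw [hIeq]; exact Ideal.mem_prod _ _
    have memf : ∀ (k) (x : R₁) (y : R₂), (x, y) ∈ f k ↔ x ∈ A k ∧ y ∈ B k := by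
      intro k x y; rw [hfeq k]; exact Ideal.mem_prod _ _
    -- find y ∈ I₂ avoiding all B k with ¬ I₂ ≤ B k
    have hy : ∃ y ∈ I₂, ∀ k, ¬ I₂ ≤ B k → y ∉ B k := by
      by_contra hcon
      push_neg at hcon
      set g : Fin n → Ideal R₂ := fun k => if I₂ ≤ B k then (⊥ : Ideal R₂) else B k with hg
      have hcov : (I₂ : Set R₂) ⊆ ⋃ k, ((g k : Ideal R₂) : Set R₂) := by
        intro y hyI
        obtain ⟨k, hk1, hk2⟩ := hcon y hyI
        exact Set.mem_iUnion.mpr ⟨k, by simp only [hg, if_neg hk1]; exact hk2⟩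
      obtain ⟨k, hk⟩ := h₂ n I₂ g hcov
      by_cases hS : I₂ ≤ B k
      · rw [hg] at hk; simp only [if_pos hS] at hk
        have hI2bot : I₂ = ⊥ := le_bot_iff.mp hk
        obtain ⟨j, hj1, hj2⟩ := hcon 0 I₂.zero_mem
        exact hj1 (hI2bot ▸ bot_le)
      · rw [hg] at hk; simp only [if_neg hS] at hk; exact hS hk
    obtain ⟨y, hyI₂, hyavoid⟩ := hy
    -- S nonempty: some j₀ with I₂ ≤ B j₀
    have hj₀ : ∃ j₀, I₂ ≤ B j₀ := by
      have h0 : ((0 : R₁), y) ∈ I := (memI 0 y).mpr ⟨I₁.zero_mem, hyI₂⟩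
      obtain ⟨s, ⟨j, rfl⟩, hj⟩ := hsub h0
      have := (memf j 0 y).mp hj
      refine ⟨j, ?_⟩
      by_contra hno
      exact hyavoid j hno this.2
    obtain ⟨j₀, hj₀⟩ := hj₀
    set A' : Fin n → Ideal R₁ := fun k => if I₂ ≤ B k then A k else A j₀ with hA'
    have hcov₁ : (I₁ : Set R₁) ⊆ ⋃ k, ((A' k : Ideal R₁) : Set R₁) := by
      intro x hxI₁
      have hxy : (x, y) ∈ I := (memI x y).mpr ⟨hxI₁, hyI₂⟩
      obtain ⟨s, ⟨j, rfl⟩, hj⟩ := hsub hxy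
      obtain ⟨hxA, hyB⟩ := (memf j x y).mp hj
      have hjS : I₂ ≤ B j := by
        by_contra hno; exact hyavoid j hno hyB
      exact Set.mem_iUnion.mpr ⟨j, by simp only [hA', if_pos hjS]; exact hxA⟩
    obtain ⟨k, hk⟩ := h₁ n I₁ A' hcov₁
    by_cases hS : I₂ ≤ B k
    · simp only [hA', if_pos hS] at hk
      refine ⟨k, ?_⟩
      rw [hfeq k]
      rintro ⟨x, z⟩ hxz
      obtain ⟨hx, hz⟩ := (memI x z).mp hxz
      exact (Ideal.mem_prod _ _).mpr ⟨hk hx, hS hz⟩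
    · simp only [hA', if_neg hS] at hk
      refine ⟨j₀, ?_⟩
      rw [hfeq j₀]
      rintro ⟨x, z⟩ hxz
      obtain ⟨hx, hz⟩ := (memI x z).mp hxz
      exact (Ideal.mem_prod _ _).mpr ⟨hk hx, hj₀ hz⟩
end

section
/- Every Bézout ring is an avoidance ring. -/
theorem bezout_isAvoidanceRing {R : Type*} [CommRing R] [IsBezout R] :
    IsAvoidanceRing R := by
  intro n I f h
  by_contra hc
  push_neg at hc
  have hx : ∀ k, ∃ x ∈ I, x ∉ f k := by
    intro k
    obtain ⟨x, hxI, hxf⟩ := SetLike.not_le_iff_exists.mp (hc k)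
    exact ⟨x, hxI, hxf⟩
  choose x hxI hxf using hx
  set J : Ideal R := Ideal.span (Set.range x) with hJ
  classical
  have hJfg : J.FG := ⟨(Finset.univ.image x), by
    simp [hJ, Finset.coe_image, Set.image_univ]⟩
  have hJP : J.IsPrincipal := IsBezout.isPrincipal_of_FG J hJfg
  obtain ⟨a, ha⟩ := hJP
  have hJI : J ≤ I := Ideal.span_le.mpr (by rintro _ ⟨k, rfl⟩; exact hxI k)
  have haI : a ∈ I := hJI (ha ▸ Ideal.subset_span rfl)
  obtain ⟨k, hak⟩ := Set.mem_iUnion.mp (h haI)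
  have hJk : J ≤ f k := by
    rw [ha, Ideal.submodule_span_eq, Ideal.span_le]
    rintro _ rfl; exact hak
  exact hxf k (hJk (Ideal.subset_span ⟨k, rfl⟩))
end

section
/- Every commutative ring containing an infinite field as a subring is an avoidance ring; more strongly, every module over such a ring has the avoidance property for submodules. -/
lemma module_avoidance {K R : Type*} [Field K] [Infinite K]
    [CommRing R] [Algebra K R]
    (M : Type*) [AddCommGroup M] [Module R M] (n : ℕ) (f : Fin n → Submodule R M)
    (h : ∀ m : M, ∃ k, m ∈ f k) : ∃ k, f k = ⊤ := by
  letI : Module K M := Module.compHom M (algebraMap K R)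
  letI : IsScalarTower K R M := ⟨fun k r m => by
    rw [Algebra.smul_def, mul_smul]
    rfl⟩
  classical
  set s : Finset (Subspace K M) :=
    Finset.univ.image (fun k => (f k).restrictScalars K) with hs
  have hcovers : ⋃ p ∈ s, (p : Set M) = Set.univ := by
    ext m
    simp only [Set.mem_iUnion, Set.mem_univ, iff_true, hs, Finset.mem_image,
      Finset.mem_univ, true_and]
    obtain ⟨k, hk⟩ := h m
    exact ⟨_, ⟨k, rfl⟩, hk⟩
  have := Subspace.top_mem_of_biUnion_eq_univ hcovers
  rw [hs, Finset.mem_image] at this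
  obtain ⟨k, -, hk⟩ := this
  exact ⟨k, (Submodule.restrictScalars_eq_top_iff _ _ _).mp hk⟩

theorem avoidance_of_infinite_field_subring {K R : Type*} [Field K] [Infinite K]
    [CommRing R] [Algebra K R] (hinj : Function.Injective (algebraMap K R)) :
    IsAvoidanceRing R ∧
      ∀ (M : Type*) [AddCommGroup M] [Module R M] (n : ℕ) (f : Fin n → Submodule R M),
        (∀ m : M, ∃ k, m ∈ f k) → ∃ k, f k = ⊤ := by
  constructor
  · intro n I f hIf
    obtain ⟨k, hk⟩ := module_avoidance (K := K) I n (fun k => Submodule.comap I.subtype (f k)) (fun m => by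
      obtain ⟨_, ⟨k, rfl⟩, hk⟩ := hIf m.2
      exact ⟨k, hk⟩)
    refine ⟨k, fun x hx => ?_⟩
    have : (⟨x, hx⟩ : I) ∈ Submodule.comap I.subtype (f k) := hk ▸ Submodule.mem_top
    exact this
  · exact fun M _ _ n f hf => module_avoidance (K := K) M n f hf
end

section
/- A finite commutative ring R is an avoidance ring if and only if R is a principal ideal ring. -/
theorem finite_avoidance_iff_pir {R : Type*} [CommRing R] [Finite R] :
    IsAvoidanceRing R ↔ IsPrincipalIdealRing R := by
  constructor
  · intro h
    classical
    refine ⟨fun I => ?_⟩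
    obtain ⟨n, ⟨e⟩⟩ := Finite.exists_equiv_fin R
    have hsub : (I : Set R) ⊆ ⋃ k, ((if e.symm k ∈ I then Ideal.span {e.symm k} else ⊥ : Ideal R) : Set R) := by
      intro x hx
      refine Set.mem_iUnion.mpr ⟨e x, ?_⟩
      rw [Equiv.symm_apply_apply, if_pos (show x ∈ I from hx)]
      exact Ideal.mem_span_singleton_self x
    obtain ⟨k, hk⟩ := h n I (fun k => if e.symm k ∈ I then Ideal.span {e.symm k} else ⊥) hsub
    by_cases hm : e.symm k ∈ I
    · simp only [hm, if_true] at hk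
      exact ⟨⟨e.symm k, le_antisymm hk ((Ideal.span_singleton_le_iff_mem I).mpr hm)⟩⟩
    · simp only [hm, if_false] at hk
      exact ⟨⟨0, by rw [Submodule.span_zero_singleton]; exact le_antisymm hk bot_le⟩⟩
  · intro h n I f hsub
    obtain ⟨a, ha⟩ := (IsPrincipalIdealRing.principal I)
    have haI : a ∈ I := ha ▸ Ideal.mem_span_singleton_self a
    obtain ⟨k, hk⟩ := Set.mem_iUnion.mp (hsub haI)
    exact ⟨k, ha ▸ (Ideal.span_singleton_le_iff_mem (f k)).mpr hk⟩
end

section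
/- Let K be a finite field. The ring R = K[x,y]/(x², xy, y²) is not an avoidance ring: the ideal (x, y) equals the finite union of the principal ideals (ax + by) for a, b ∈ K, but is not principal. -/
open MvPolynomial

/-- The ring `K[x,y]/(x², xy, y²)`. -/
def SquareZeroRing (K : Type*) [Field K] : Type _ :=
  MvPolynomial (Fin 2) K ⧸
    (Ideal.span {(X 0 : MvPolynomial (Fin 2) K) ^ 2, X 0 * X 1, X 1 ^ 2})

noncomputable instance (K : Type*) [Field K] : CommRing (SquareZeroRing K) :=
  Ideal.Quotient.commRing _

/-- The image of a polynomial in `K[x,y]/(x², xy, y²)`. -/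
noncomputable def sqMk (K : Type*) [Field K] :
    MvPolynomial (Fin 2) K →+* SquareZeroRing K :=
  Ideal.Quotient.mk _

namespace SqAux
open TrivSqZeroExt

variable (K : Type*) [Field K]

noncomputable def J : Ideal (MvPolynomial (Fin 2) K) :=
  Ideal.span {(X 0 : MvPolynomial (Fin 2) K) ^ 2, X 0 * X 1, X 1 ^ 2}

lemma XX_mem (n i : Fin 2) : (X n * X i : MvPolynomial (Fin 2) K) ∈ J K := by
  fin_cases n <;> fin_cases i <;> simp only [J]
  · exact Ideal.subset_span (by simp [sq])
  · exact Ideal.subset_span (by simp)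
  · rw [mul_comm]; exact Ideal.subset_span (by simp)
  · exact Ideal.subset_span (by simp [sq])

lemma sub_const_mul_X_mem (f : MvPolynomial (Fin 2) K) (i : Fin 2) :
    (f - C (constantCoeff f)) * X i ∈ J K := by
  induction f using MvPolynomial.induction_on with
  | C a => simp
  | add p q hp hq =>
      have : (p + q - C (constantCoeff (p + q))) * X i
          = (p - C (constantCoeff p)) * X i + (q - C (constantCoeff q)) * X i := by
        rw [map_add, map_add]; ring
      rw [this]; exact Ideal.add_mem _ hp hq
  | mul_X p n _ =>
      have : (p * X n - C (constantCoeff (p * X n))) * X i = p * (X n * X i) := by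
        simp; ring
      rw [this]; exact Ideal.mul_mem_left _ _ (XX_mem K n i)

lemma key (f : MvPolynomial (Fin 2) K) (i : Fin 2) :
    sqMk K (f * X i) = sqMk K (C (constantCoeff f) * X i) := by
  have h := sub_const_mul_X_mem K f i
  rw [sub_mul] at h
  exact Ideal.Quotient.eq.mpr (by exact h)

noncomputable def phi : MvPolynomial (Fin 2) K →ₐ[K] TrivSqZeroExt K (Fin 2 → K) :=
  aeval (fun i => inr (Pi.single i 1))

lemma phi_lin (a b : K) : phi K (C a * X 0 + C b * X 1) =
    inr (a • (Pi.single 0 1 : Fin 2 → K) + b • (Pi.single 1 1 : Fin 2 → K)) := by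
  simp [phi, algebraMap_eq_inl', inl_mul_inr, inr_add]

lemma phi_ker : ∀ p ∈ J K, (phi K).toRingHom p = 0 := by
  intro p hp
  have : J K ≤ RingHom.ker (phi K).toRingHom := by
    rw [J, Ideal.span_le]
    intro q hq
    simp only [Set.mem_insert_iff, Set.mem_singleton_iff] at hq
    rcases hq with h | h | h <;> subst h <;>
      simp [RingHom.mem_ker, phi, sq, inr_mul_inr]
  exact this hp

noncomputable def psi : SquareZeroRing K →+* TrivSqZeroExt K (Fin 2 → K) :=
  Ideal.Quotient.lift (J K) (phi K).toRingHom (phi_ker K)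

lemma psi_mk (p : MvPolynomial (Fin 2) K) : psi K (sqMk K p) = phi K p :=
  Ideal.Quotient.lift_mk (J K) _ _

lemma lin_inj {a b c d : K}
    (h : sqMk K (C a * X 0 + C b * X 1) = sqMk K (C c * X 0 + C d * X 1)) :
    a = c ∧ b = d := by
  have h' := congrArg (psi K) h
  rw [psi_mk, psi_mk, phi_lin, phi_lin] at h'
  have h2 := congrArg TrivSqZeroExt.snd h'
  rw [snd_inr, snd_inr] at h2
  exact ⟨by simpa using congrFun h2 0, by simpa using congrFun h2 1⟩

lemma sqMk_surjective : Function.Surjective (sqMk K) :=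
  Ideal.Quotient.mk_surjective

lemma x_rep : sqMk K (X 0) = sqMk K (C 1 * X 0 + C 0 * X 1) := by
  congr 1; simp

lemma y_rep : sqMk K (X 1) = sqMk K (C 0 * X 0 + C 1 * X 1) := by
  congr 1; simp

lemma mul_lin (s : SquareZeroRing K) (a b : K) :
    ∃ c : K, s * sqMk K (C a * X 0 + C b * X 1)
      = sqMk K (C (c * a) * X 0 + C (c * b) * X 1) := by
  obtain ⟨h, rfl⟩ := sqMk_surjective K s
  refine ⟨constantCoeff h, ?_⟩
  rw [← map_mul]
  have e1 : h * (C a * X 0 + C b * X 1) = (h * C a) * X 0 + (h * C b) * X 1 := by ring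
  rw [e1, map_add, key K (h * C a) 0, key K (h * C b) 1, ← map_add]
  congr 1
  simp [mul_comm]

lemma mem_m_rep (r : SquareZeroRing K)
    (hr : r ∈ Ideal.span {sqMk K (X 0), sqMk K (X 1)}) :
    ∃ a b : K, r = sqMk K (C a * X 0 + C b * X 1) := by
  obtain ⟨s, t, rfl⟩ := Ideal.mem_span_pair.mp hr
  obtain ⟨c, hc⟩ := mul_lin K s 1 0
  obtain ⟨d, hd⟩ := mul_lin K t 0 1
  refine ⟨c, d, ?_⟩
  rw [x_rep, y_rep, hc, hd, ← map_add]
  congr 1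
  simp

lemma lin_mem (a b : K) :
    sqMk K (C a * X 0 + C b * X 1) ∈ Ideal.span {sqMk K (X 0), sqMk K (X 1)} := by
  refine Ideal.mem_span_pair.mpr ⟨sqMk K (C a), sqMk K (C b), ?_⟩
  rw [← map_mul, ← map_mul, ← map_add]

end SqAux

theorem squareZeroRing_not_avoidance (K : Type*) [Field K] [Fintype K] :
    ((Ideal.span {sqMk K (X 0), sqMk K (X 1)} : Ideal (SquareZeroRing K)) : Set (SquareZeroRing K)) =
        (⋃ (a : K) (b : K),
          ((Ideal.span {sqMk K (C a * X 0 + C b * X 1)} : Ideal (SquareZeroRing K)) :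
            Set (SquareZeroRing K))) ∧
      ¬ (Ideal.span {sqMk K (X 0), sqMk K (X 1)} : Ideal (SquareZeroRing K)).IsPrincipal ∧
      ¬ IsAvoidanceRing (SquareZeroRing K) := by
  set m : Ideal (SquareZeroRing K) := Ideal.span {sqMk K (X 0), sqMk K (X 1)} with hm
  have hunion : (m : Set (SquareZeroRing K)) =
      (⋃ (a : K) (b : K),
        ((Ideal.span {sqMk K (C a * X 0 + C b * X 1)} : Ideal (SquareZeroRing K)) :
          Set (SquareZeroRing K))) := by
    ext r
    constructor
    · intro hr
      obtain ⟨a, b, rfl⟩ := SqAux.mem_m_rep K r hr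
      exact Set.mem_iUnion.2 ⟨a, Set.mem_iUnion.2 ⟨b, Ideal.mem_span_singleton_self _⟩⟩
    · intro hr
      obtain ⟨a, ha⟩ := Set.mem_iUnion.1 hr
      obtain ⟨b, hb⟩ := Set.mem_iUnion.1 ha
      obtain ⟨s, rfl⟩ := Ideal.mem_span_singleton'.mp hb
      exact Ideal.mul_mem_left _ _ (SqAux.lin_mem K a b)
  have hnp : ¬ m.IsPrincipal := by
    rintro ⟨r, hr⟩
    have hrm : r ∈ m := by rw [hr]; exact Ideal.mem_span_singleton_self _
    obtain ⟨a, b, rfl⟩ := SqAux.mem_m_rep K r hrm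
    have hx : sqMk K (X 0) ∈ m := Ideal.subset_span (by simp)
    have hy : sqMk K (X 1) ∈ m := Ideal.subset_span (by simp)
    rw [hr] at hx hy
    obtain ⟨s, hs⟩ := Ideal.mem_span_singleton'.mp hx
    obtain ⟨t, ht⟩ := Ideal.mem_span_singleton'.mp hy
    obtain ⟨c, hc⟩ := SqAux.mul_lin K s a b
    obtain ⟨d, hd⟩ := SqAux.mul_lin K t a b
    rw [hc, SqAux.x_rep K] at hs
    rw [hd, SqAux.y_rep K] at ht
    obtain ⟨h1, h2⟩ := SqAux.lin_inj K hs
    obtain ⟨h3, h4⟩ := SqAux.lin_inj K ht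
    -- h1 : c * a = 1, h2 : c * b = 0, h3 : d * a = 0, h4 : d * b = 1
    have hc0 : c ≠ 0 := by intro h; rw [h, zero_mul] at h1; exact zero_ne_one h1
    have hb0 : b = 0 := by
      rcases mul_eq_zero.mp h2 with h | h
      · exact absurd h hc0
      · exact h
    rw [hb0, mul_zero] at h4
    exact zero_ne_one h4
  refine ⟨hunion, hnp, ?_⟩
  intro hA
  classical
  set e : Fin (Fintype.card (K × K)) ≃ K × K := (Fintype.equivFin (K × K)).symm with he
  set f : Fin (Fintype.card (K × K)) → Ideal (SquareZeroRing K) :=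
    fun k => Ideal.span {sqMk K (C (e k).1 * X 0 + C (e k).2 * X 1)} with hf
  have hsub : (m : Set (SquareZeroRing K)) ⊆ ⋃ k, (f k : Set (SquareZeroRing K)) := by
    rw [hunion]
    intro z hz
    obtain ⟨a, ha⟩ := Set.mem_iUnion.1 hz
    obtain ⟨b, hb⟩ := Set.mem_iUnion.1 ha
    refine Set.mem_iUnion.2 ⟨e.symm (a, b), ?_⟩
    simpa [hf, Equiv.apply_symm_apply] using hb
  obtain ⟨k, hk⟩ := hA _ m f hsub
  have hge : f k ≤ m := by
    rw [hf]
    exact Ideal.span_le.mpr (Set.singleton_subset_iff.mpr (SqAux.lin_mem K _ _))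
  exact hnp ⟨⟨_, le_antisymm hk hge⟩⟩
end

section
/- If every finitely generated ideal of an integral domain R is a multiplication ideal, then R is an avoidance ring. -/
/-- Nakayama-type step: a nonzero f.g. ideal `J` in a domain satisfies `J ≰ Q * J`
for any maximal ideal `Q`. -/
lemma exists_not_mem_mul {R : Type*} [CommRing R] [IsDomain R] {J : Ideal R} (hJ : J.FG)
    (hJbot : J ≠ ⊥) {Q : Ideal R} (hQ : Q.IsMaximal) : ∃ v ∈ J, v ∉ Q * J := by
  by_contra h
  push_neg at h
  have hle : J ≤ Q • J := by
    intro x hx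
    simpa [Ideal.smul_eq_mul] using h x hx
  obtain ⟨r, hr1, hr0⟩ :=
    Submodule.exists_sub_one_mem_and_smul_eq_zero_of_fg_of_le_smul Q J hJ hle
  obtain ⟨x, hxJ, hx0⟩ := Submodule.exists_mem_ne_zero_of_ne_bot hJbot
  have hrx : r * x = 0 := hr0 x hxJ
  have hr : r = 0 := by
    rcases mul_eq_zero.mp hrx with h' | h'
    · exact h'
    · exact absurd h' hx0
  have h1 : (1 : R) ∈ Q := by
    have := Q.neg_mem hr1
    simpa [hr] using this
  exact hQ.ne_top ((Ideal.eq_top_iff_one Q).mpr h1)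

/-- The finitely generated case of the avoidance property. -/
lemma fg_avoidance {R : Type*} [CommRing R] [IsDomain R]
    (hmult : ∀ I : Ideal R, I.FG → ∀ J : Ideal R, J ≤ I → ∃ K : Ideal R, J = I * K)
    (n : ℕ) (J : Ideal R) (hJ : J.FG) (f : Fin n → Ideal R)
    (hcov : (J : Set R) ⊆ ⋃ k, (f k : Set R)) : ∃ k, J ≤ f k := by
  classical
  obtain ⟨k₀, hk₀⟩ := Set.mem_iUnion.mp (hcov J.zero_mem)
  by_cases hbot : J = ⊥
  · exact ⟨k₀, by simp [hbot]⟩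
  by_contra hcon
  push_neg at hcon
  -- choose multipliers: f k ⊓ J = J * K k with K k proper
  have hKex : ∀ k, ∃ K : Ideal R, f k ⊓ J = J * K := fun k => hmult J hJ _ inf_le_right
  choose K hK using hKex
  have hKne : ∀ k, K k ≠ ⊤ := by
    intro k h
    apply hcon k
    have h' : f k ⊓ J = J := by rw [hK k, h, Ideal.mul_top]
    exact inf_eq_right.mp h'
  choose P hPmax hKP using fun k => Ideal.exists_le_maximal (K k) (hKne k)
  set T : Finset (Ideal R) := Finset.image P Finset.univ with hT
  have hTmax : ∀ Q ∈ T, Q.IsMaximal := by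
    intro Q hQ
    obtain ⟨k, -, rfl⟩ := Finset.mem_image.mp hQ
    exact hPmax k
  -- For each Q ∈ T, find e ∈ J with e ∉ Q*J but e ∈ Q'*J for all other Q' ∈ T
  have key : ∀ Q ∈ T, ∃ e ∈ J, e ∉ Q * J ∧ ∀ Q' ∈ T, Q' ≠ Q → e ∈ Q' * J := by
    intro Q hQT
    have hQ := hTmax Q hQT
    haveI : Q.IsPrime := hQ.isPrime
    obtain ⟨v, hvJ, hvQ⟩ := exists_not_mem_mul hJ hbot hQ
    have hy : ∀ Q' ∈ T.erase Q, ∃ y ∈ Q', y ∉ Q := by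
      intro Q' hQ'
      have hne : Q' ≠ Q := (Finset.mem_erase.mp hQ').1
      have hQ'max := hTmax Q' (Finset.mem_erase.mp hQ').2
      by_contra h
      push_neg at h
      exact hne (hQ'max.eq_of_le hQ.ne_top h)
    choose y hy1 hy2 using hy
    set q : R := ∏ Q' ∈ (T.erase Q).attach, y Q'.1 Q'.2 with hq
    have hqQ : q ∉ Q := by
      intro hmem
      obtain ⟨i, -, hi⟩ := Ideal.IsPrime.prod_mem_iff.mp hmem
      exact hy2 i.1 i.2 hi
    have hqQ' : ∀ Q' ∈ T.erase Q, q ∈ Q' := by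
      intro Q' h
      have hi : (⟨Q', h⟩ : {x // x ∈ T.erase Q}) ∈ (T.erase Q).attach := Finset.mem_attach _ _
      have := Finset.mul_prod_erase ((T.erase Q).attach) (fun i => y i.1 i.2) hi
      rw [hq, ← this]
      exact Ideal.mul_mem_right _ _ (hy1 Q' h)
    refine ⟨q * v, Ideal.mul_mem_left _ _ hvJ, ?_, ?_⟩
    · intro he
      obtain ⟨c, i, hiQ, hci⟩ := hQ.exists_inv hqQ
      have hv : c * (q * v) + i * v = v := by
        calc c * (q * v) + i * v = (c * q + i) * v := by ring
          _ = 1 * v := by rw [hci]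
          _ = v := one_mul v
      have hvmem : v ∈ Q * J := by
        rw [← hv]
        exact Ideal.add_mem _ (Ideal.mul_mem_left _ c he) (Ideal.mul_mem_mul hiQ hvJ)
      exact hvQ hvmem
    · intro Q' hQ'T hne
      exact Ideal.mul_mem_mul (hqQ' Q' (Finset.mem_erase.mpr ⟨hne, hQ'T⟩)) hvJ
  choose e he1 he2 he3 using key
  set g : Ideal R → R := fun Q => if h : Q ∈ T then e Q h else 0 with hg
  set m : R := ∑ Q ∈ T, g Q with hm
  have hmJ : m ∈ J := by
    apply Ideal.sum_mem
    intro Q hQ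
    rw [hg]
    simp only [hQ, dif_pos]
    exact he1 Q hQ
  obtain ⟨k, hmk⟩ := Set.mem_iUnion.mp (hcov hmJ)
  have hmPk : m ∈ P k * J := by
    have h1 : m ∈ J * K k := by rw [← hK k]; exact Submodule.mem_inf.mpr ⟨hmk, hmJ⟩
    have h2 : J * K k ≤ P k * J := by
      rw [mul_comm]
      exact Ideal.mul_mono_left (hKP k)
    exact h2 h1
  have hPkT : P k ∈ T := Finset.mem_image.mpr ⟨k, Finset.mem_univ k, rfl⟩
  have hrest : (∑ Q ∈ T.erase (P k), g Q) ∈ P k * J := by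
    apply Ideal.sum_mem
    intro Q hQ
    have hQT : Q ∈ T := (Finset.mem_erase.mp hQ).2
    have hne : Q ≠ P k := (Finset.mem_erase.mp hQ).1
    rw [hg]
    simp only [hQT, dif_pos]
    exact he3 Q hQT (P k) hPkT (Ne.symm hne)
  have hsum : g (P k) + ∑ Q ∈ T.erase (P k), g Q = m := Finset.add_sum_erase T g hPkT
  have : g (P k) ∈ P k * J := by
    have := Submodule.sub_mem _ hmPk hrest
    rwa [← hsum, add_sub_cancel_right] at this
  rw [hg] at this
  simp only [hPkT, dif_pos] at this
  exact he2 (P k) hPkT this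

theorem avoidance_of_fg_multiplication_ideals {R : Type*} [CommRing R] [IsDomain R]
    (hmult : ∀ I : Ideal R, I.FG → ∀ J : Ideal R, J ≤ I → ∃ K : Ideal R, J = I * K) :
    IsAvoidanceRing R := by
  intro n I f hcov
  by_contra hcon
  push_neg at hcon
  have hx : ∀ k, ∃ x ∈ I, x ∉ f k := by
    intro k
    by_contra h
    push_neg at h
    exact hcon k h
  choose x hxI hxf using hx
  set J : Ideal R := Ideal.span (Set.range x) with hJdef
  have hJfg : J.FG := Submodule.fg_span (Set.finite_range x)
  have hJI : J ≤ I := Ideal.span_le.mpr (by rintro _ ⟨k, rfl⟩; exact hxI k)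
  have hJcov : (J : Set R) ⊆ ⋃ k, (f k : Set R) := fun z hz => hcov (hJI hz)
  obtain ⟨k, hk⟩ := fg_avoidance hmult n J hJfg f hJcov
  exact hxf k (hk (Ideal.subset_span ⟨k, rfl⟩))
end

section
/- Let φ : R → S be a cyclically pure ring map. If S is von Neumann regular (absolutely flat), then R is von Neumann regular. If S is a valuation ring (an integral domain whose ideals are totally ordered by inclusion), then R is a valuation ring. -/
theorem cyclically_pure_descends {R S : Type*} [CommRing R] [CommRing S] (φ : R →+* S)
    (hpure : ∀ I : Ideal R, (I.map φ).comap φ = I) :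
    ((∀ a : S, ∃ x : S, a = a ^ 2 * x) → ∀ a : R, ∃ x : R, a = a ^ 2 * x) ∧
      ((IsDomain S ∧ ∀ J₁ J₂ : Ideal S, J₁ ≤ J₂ ∨ J₂ ≤ J₁) →
        (IsDomain R ∧ ∀ I₁ I₂ : Ideal R, I₁ ≤ I₂ ∨ I₂ ≤ I₁)) := by
  -- key: membership in span singleton descends
  have key : ∀ a b : R, φ a ∈ Ideal.span {φ b} → a ∈ Ideal.span ({b} : Set R) := by
    intro a b h
    have : φ a ∈ (Ideal.span {b}).map φ := by
      rwa [Ideal.map_span, Set.image_singleton]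
    have := (Ideal.mem_comap (f := φ)).2 this
    rwa [hpure] at this
  have hinj : Function.Injective φ := by
    rw [injective_iff_map_eq_zero]
    intro a ha
    have : a ∈ (Ideal.map φ ⊥).comap φ := by
      simp [Ideal.mem_comap, ha]
    rwa [hpure, Ideal.mem_bot] at this
  constructor
  · intro h a
    obtain ⟨x, hx⟩ := h (φ a)
    have : φ a ∈ Ideal.span {φ (a ^ 2)} := by
      rw [Ideal.mem_span_singleton, map_pow]
      exact ⟨x, hx⟩
    have := key a (a ^ 2) (by simpa using this)
    rw [Ideal.mem_span_singleton] at this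
    obtain ⟨x, hx⟩ := this
    exact ⟨x, hx⟩
  · rintro ⟨hdom, hval⟩
    have hRdom : IsDomain R := by
      have hnt : Nontrivial R := ⟨1, 0, fun h => by
        have : (1 : S) = 0 := by rw [← map_one φ, ← map_zero φ, h]
        exact one_ne_zero this⟩
      exact Function.Injective.isDomain φ hinj
    refine ⟨hRdom, ?_⟩
    -- divisibility comparison of elements
    have hdvd : ∀ a b : R, a ∈ Ideal.span ({b} : Set R) ∨ b ∈ Ideal.span ({a} : Set R) := by
      intro a b
      rcases hval (Ideal.span {φ a}) (Ideal.span {φ b}) with h | h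
      · exact Or.inl (key a b (h (Ideal.mem_span_singleton_self _)))
      · exact Or.inr (key b a (h (Ideal.mem_span_singleton_self _)))
    intro I₁ I₂
    by_cases h : I₁ ≤ I₂
    · exact Or.inl h
    · right
      obtain ⟨a, haI, haN⟩ := Set.not_subset.1 h
      intro b hb
      rcases hdvd a b with h' | h'
      · exact absurd (((Ideal.span_singleton_le_iff_mem _).2 hb h')) haN
      · exact (Ideal.span_singleton_le_iff_mem _).2 haI h'
end

section
/- The ring of integers ℤ has strong avoidance: for any ring map φ : R → ℤ and ideals I, I₁, …, Iₙ of R with I ⊆ ⋃_{k=1}^n I_k, the extension Iℤ is contained in I_kℤ for some k. -/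
theorem int_strong_avoidance {R : Type*} [CommRing R] (φ : R →+* ℤ)
    (n : ℕ) (I : Ideal R) (f : Fin n → Ideal R)
    (h : (I : Set R) ⊆ ⋃ k, (f k : Set R)) :
    ∃ k, I.map φ ≤ (f k).map φ := by
  have hsurj : Function.Surjective φ := fun m => ⟨(m : R), by simp⟩
  obtain ⟨d, hd⟩ : (I.map φ).IsPrincipal := inferInstance
  have hdmem : d ∈ I.map φ := hd ▸ Ideal.subset_span rfl
  obtain ⟨x, hxI, hx⟩ := Ideal.mem_map_iff_of_surjective φ hsurj |>.mp hdmem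
  obtain ⟨_, ⟨k, rfl⟩, hk⟩ := h hxI
  refine ⟨k, ?_⟩
  rw [hd, Submodule.span_le, Set.singleton_subset_iff]
  exact hx ▸ Ideal.mem_map_of_mem φ hk
end
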